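/- For any finite group G and any normal subgroup N of G, Ω_ρ(G/N) ≤ Ω_ρ(G), with equality if and only if N is trivial. -/
import Mathlib

noncomputable def rho (G : Type*) [Group G] : ℕ := ∏ᶠ x : G, orderOf x

noncomputable def OmegaRho (G : Type*) [Group G] : ℕ :=
  ArithmeticFunction.cardFactors (rho G)

lemma cardFactors_finset_prod {ι : Type*} (s : Finset ι) (f : ι → ℕ)
    (h : ∀ i ∈ s, f i ≠ 0) :
    ArithmeticFunction.cardFactors (∏ i ∈ s, f i)
      = ∑ i ∈ s, ArithmeticFunction.cardFactors (f i) := by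
  induction s using Finset.cons_induction with
  | empty => simp
  | cons a s ha ih =>
    rw [Finset.prod_cons, Finset.sum_cons,
      ArithmeticFunction.cardFactors_mul (h a (Finset.mem_cons_self a s))
        (Finset.prod_ne_zero_iff.2 fun i hi => h i (Finset.mem_cons_of_mem hi)),
      ih fun i hi => h i (Finset.mem_cons_of_mem hi)]

lemma OmegaRho_eq_sum (G : Type*) [Group G] [Fintype G] :
    OmegaRho G = ∑ x : G, ArithmeticFunction.cardFactors (orderOf x) := by
  rw [OmegaRho, rho, finprod_eq_prod_of_fintype,
    cardFactors_finset_prod _ _ fun x _ => (orderOf_pos x).ne']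

lemma cardFactors_le_of_dvd {a b : ℕ} (hb : b ≠ 0) (h : a ∣ b) :
    ArithmeticFunction.cardFactors a ≤ ArithmeticFunction.cardFactors b := by
  obtain ⟨c, rfl⟩ := h
  have ha : a ≠ 0 := fun h => by simp [h] at hb
  have hc : c ≠ 0 := fun h => by simp [h] at hb
  rw [ArithmeticFunction.cardFactors_mul ha hc]
  exact Nat.le_add_right _ _

lemma cardFactors_pos_of_two_le {n : ℕ} (hn : 2 ≤ n) :
    0 < ArithmeticFunction.cardFactors n := by
  obtain ⟨p, hp, hpd⟩ := Nat.exists_prime_and_dvd (by omega : n ≠ 1)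
  have := cardFactors_le_of_dvd (by omega : n ≠ 0) hpd
  rw [ArithmeticFunction.cardFactors_apply_prime hp] at this
  omega

theorem omegaRho_quotient_le (G : Type*) [Group G] [Finite G] (N : Subgroup G) [N.Normal] :
    OmegaRho (G ⧸ N) ≤ OmegaRho G ∧ (OmegaRho (G ⧸ N) = OmegaRho G ↔ N = ⊥) := by
  classical
  haveI : Fintype G := Fintype.ofFinite G
  haveI : Fintype (G ⧸ N) := Fintype.ofFinite _
  have key : ∑ y : G ⧸ N, ArithmeticFunction.cardFactors (orderOf y)
      ≤ ∑ x : G, ArithmeticFunction.cardFactors (orderOf ((QuotientGroup.mk' N) x)) := by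
    calc ∑ y : G ⧸ N, ArithmeticFunction.cardFactors (orderOf y)
        = ∑ y : G ⧸ N,
            ArithmeticFunction.cardFactors (orderOf ((QuotientGroup.mk' N) y.out)) := by
          refine Finset.sum_congr rfl fun y _ => ?_
          congr 1
          exact congrArg orderOf (Quotient.out_eq y).symm
      _ = ∑ x ∈ Finset.univ.image (fun y : G ⧸ N => y.out),
            ArithmeticFunction.cardFactors (orderOf ((QuotientGroup.mk' N) x)) := by
          refine (Finset.sum_image
            (g := fun y : G ⧸ N => Quotient.out y)
            (f := fun x : G => ArithmeticFunction.cardFactors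
              (orderOf ((QuotientGroup.mk' N) x))) ?_).symm
          exact fun a _ b _ h => Quotient.out_injective h
      _ ≤ ∑ x : G, ArithmeticFunction.cardFactors (orderOf ((QuotientGroup.mk' N) x)) :=
          Finset.sum_le_sum_of_subset (Finset.subset_univ _)
  have term_le : ∀ x : G,
      ArithmeticFunction.cardFactors (orderOf ((QuotientGroup.mk' N) x))
        ≤ ArithmeticFunction.cardFactors (orderOf x) := fun x =>
    cardFactors_le_of_dvd (orderOf_pos x).ne' (orderOf_map_dvd _ x)
  have hle : OmegaRho (G ⧸ N) ≤ OmegaRho G := by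
    rw [OmegaRho_eq_sum, OmegaRho_eq_sum]
    exact key.trans (Finset.sum_le_sum fun x _ => term_le x)
  refine ⟨hle, ⟨fun heq => ?_, fun h => ?_⟩⟩
  · by_contra hN
    obtain ⟨x, hxN, hx1⟩ := N.bot_or_exists_ne_one.resolve_left hN
    have hlt : ArithmeticFunction.cardFactors (orderOf ((QuotientGroup.mk' N) x))
        < ArithmeticFunction.cardFactors (orderOf x) := by
      have h1 : (QuotientGroup.mk' N) x = 1 := (QuotientGroup.eq_one_iff x).2 hxN
      have h2 : 2 ≤ orderOf x := by
        have hpos := orderOf_pos x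
        have hne : orderOf x ≠ 1 := fun h => hx1 (orderOf_eq_one_iff.mp h)
        omega
      rw [h1, orderOf_one]
      simpa using cardFactors_pos_of_two_le h2
    have hstrict : ∑ x : G, ArithmeticFunction.cardFactors (orderOf ((QuotientGroup.mk' N) x))
        < ∑ x : G, ArithmeticFunction.cardFactors (orderOf x) :=
      Finset.sum_lt_sum (fun i _ => term_le i) ⟨x, Finset.mem_univ x, hlt⟩
    have hfinal : OmegaRho (G ⧸ N) < OmegaRho G := by
      rw [OmegaRho_eq_sum, OmegaRho_eq_sum]
      exact key.trans_lt hstrict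
    omega
  · subst h
    rw [OmegaRho_eq_sum, OmegaRho_eq_sum]
    exact Fintype.sum_equiv (QuotientGroup.quotientBot (G := G)).toEquiv _ _
      fun y => (congrArg _ (orderOf_injective
        (QuotientGroup.quotientBot (G := G)).toMonoidHom
        (QuotientGroup.quotientBot (G := G)).injective y)).symm
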